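/- Let p, q ∈ (1,∞), k > −1, ℓ > 1−p, and x ∈ [0, π_{p,q}/2]. Then ∫₀^x sin_{p,q}^k(t) · cos_{p,q}^ℓ(t) dt = (1/(k+1)) · sin_{p,q}^{k+1}(x) · ∑_{n=0}^∞ [((k+1)/q)_n · ((1−ℓ)/p)_n / (1+(k+1)/q)_n] · sin_{p,q}^{qn}(x)/n!, where the series is the Gaussian hypergeometric series F((k+1)/q, (1−ℓ)/p; 1+(k+1)/q; sin_{p,q}^q(x)) (which converges for all such x since the third parameter exceeds the sum of the first two). -/

import Mathlib

open Set MeasureTheory Filter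

/-- Generalized arcsine: `arcsin_{p,q}(x) = ∫₀ˣ (1 - tᵠ)^(-1/p) dt`. -/
noncomputable def gArcsin (p q x : ℝ) : ℝ := ∫ t in (0:ℝ)..x, (1 - t ^ q) ^ (-(1 / p))

/-- Generalized pi: `π_{p,q} = 2 ∫₀¹ (1 - tᵠ)^(-1/p) dt`. -/
noncomputable def gPi (p q : ℝ) : ℝ := 2 * gArcsin p q 1

/-- `S` is the generalized sine `sin_{p,q}` (the inverse of `gArcsin p q` on `[0,1]`). -/
def IsGSin (p q : ℝ) (S : ℝ → ℝ) : Prop :=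
  ∀ y ∈ Icc (0:ℝ) 1, S (gArcsin p q y) = y

/-- `C` is the generalized cosine `cos_{p,q}`, the derivative of `S = sin_{p,q}`
on `[0, π_{p,q}/2]`. -/
def IsGCos (p q : ℝ) (S C : ℝ → ℝ) : Prop :=
  ∀ x ∈ Icc (0:ℝ) (gPi p q / 2), HasDerivWithinAt S (C x) (Icc (0:ℝ) (gPi p q / 2)) x

namespace Stmt3Aux

noncomputable def poch (a : ℝ) (n : ℕ) : ℝ := (ascPochhammer ℝ n).eval a

lemma poch_zero (a : ℝ) : poch a 0 = 1 := by simp [poch]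

lemma poch_succ (a : ℝ) (n : ℕ) : poch a (n + 1) = poch a n * (a + n) := by
  simp [poch, ascPochhammer_succ_right]

lemma poch_pos {a : ℝ} (ha : 0 < a) (n : ℕ) : 0 < poch a n := by
  induction n with
  | zero => simp [poch_zero]
  | succ n ih => rw [poch_succ]; positivity

/-- key identity `(1+b)_n * b = (b)_n * (b+n)`. -/
lemma poch_ratio (b : ℝ) (n : ℕ) : poch (1 + b) n * b = poch b n * (b + n) := by
  induction n with
  | zero => simp [poch_zero]
  | succ n ih =>
    rw [poch_succ, poch_succ]
    push_cast
    calc poch (1+b) n * (1 + b + n) * b = poch (1+b) n * b * (1 + b + n) := by ring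
      _ = poch b n * (b + n) * (1 + b + n) := by rw [ih]
      _ = poch b n * (b + (n+1)) * (b + n) := by ring
      _ = poch b n * (b + n) * (b + (n+1)) := by ring

/-- Decay bound for `|(a)_n|/n!` when `a < 1`. -/
lemma poch_decay {a : ℝ} (ha : a < 1) :
    ∃ C : ℝ, 0 < C ∧ ∀ n : ℕ, |poch a n| / n.factorial ≤ C * ((n : ℝ) + 1) ^ (a - 1) := by
  set r : ℝ := 1 - a with hr
  have hr0 : 0 < r := by linarith
  set N : ℕ := ⌈r⌉₊ with hN
  have hNr : r ≤ (N : ℝ) := Nat.le_ceil r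
  set D : ℝ := (|poch a N| / N.factorial + 1) * ((N : ℝ) + 1) ^ r with hD
  have hD0 : 0 < D := by
    apply mul_pos
    · have : (0:ℝ) ≤ |poch a N| / N.factorial := by positivity
      linarith
    · positivity
  have key : ∀ n : ℕ, N ≤ n → |poch a n| / n.factorial ≤ D * ((n : ℝ) + 1) ^ (a - 1) := by
    intro n hn
    induction n, hn using Nat.le_induction with
    | base =>
      have h1 : ((N:ℝ) + 1) ^ (a-1) = (((N:ℝ)+1) ^ r)⁻¹ := by
        rw [← Real.rpow_neg (by positivity)]
        congr 1; rw [hr]; ring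
      have h2 : D * (((N:ℝ)+1) ^ r)⁻¹ = |poch a N| / N.factorial + 1 := by
        rw [hD, mul_assoc, mul_inv_cancel₀ (by positivity), mul_one]
      rw [h1, h2]
      have : (0:ℝ) ≤ |poch a N| / N.factorial := by positivity
      linarith
    | succ n hn ih =>
      have hn1 : (0:ℝ) < (n:ℝ) + 1 := by positivity
      have hfact : ((n+1).factorial : ℝ) = (n.factorial : ℝ) * ((n:ℝ) + 1) := by
        push_cast [Nat.factorial_succ]; ring
      have hna : 0 ≤ a + n := by
        have h5 : r ≤ (n:ℝ) := le_trans hNr (by exact_mod_cast hn)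
        rw [hr] at h5; linarith
      have step1 : |poch a (n+1)| / (n+1).factorial
          = |poch a n| / n.factorial * ((a + n) / ((n:ℝ) + 1)) := by
        rw [poch_succ, abs_mul, abs_of_nonneg hna, hfact]
        field_simp
        try ring
      have hq2 : (a + n) / ((n:ℝ)+1) ≤ Real.exp (-(r / ((n:ℝ)+1))) := by
        have h6 := Real.add_one_le_exp (-(r / ((n:ℝ)+1)))
        have hq1 : (a + n) / ((n:ℝ)+1) = 1 - r / ((n:ℝ)+1) := by
          field_simp; rw [hr]; ring
        rw [hq1]; linarith
      have hq3 : Real.exp (-(r/((n:ℝ)+1))) ≤ (((n:ℝ)+1)/((n:ℝ)+2)) ^ r := by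
        have h1 : ((n:ℝ)+2)/((n:ℝ)+1) ≤ Real.exp (1/((n:ℝ)+1)) := by
          have h0 := Real.add_one_le_exp (1/((n:ℝ)+1))
          have h2 : ((n:ℝ)+2)/((n:ℝ)+1) = 1/((n:ℝ)+1) + 1 := by field_simp; ring
          linarith
        have h4 : (((n:ℝ)+2)/((n:ℝ)+1)) ^ r ≤ Real.exp (r/((n:ℝ)+1)) := by
          calc (((n:ℝ)+2)/((n:ℝ)+1)) ^ r ≤ (Real.exp (1/((n:ℝ)+1))) ^ r :=
                Real.rpow_le_rpow (by positivity) h1 hr0.le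
            _ = Real.exp (1/((n:ℝ)+1) * r) := (Real.exp_mul _ _).symm
            _ = Real.exp (r/((n:ℝ)+1)) := by rw [one_div, inv_mul_eq_div]
        have h5 : (((n:ℝ)+1)/((n:ℝ)+2)) ^ r = ((((n:ℝ)+2)/((n:ℝ)+1)) ^ r)⁻¹ := by
          rw [← Real.inv_rpow (by positivity)]
          congr 1
          rw [inv_div]
        rw [h5, Real.exp_neg]
        exact inv_anti₀ (by positivity) h4
      have hstep : |poch a (n+1)| / (n+1).factorial
          ≤ D * ((n:ℝ)+1)^(a-1) * (((n:ℝ)+1)/((n:ℝ)+2))^r := by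
        rw [step1]
        apply mul_le_mul ih (le_trans hq2 hq3) (by positivity) (by positivity)
      have p1 : (0:ℝ) < ((n:ℝ)+1)^r := Real.rpow_pos_of_pos (by positivity) _
      have p2 : (0:ℝ) < ((n:ℝ)+2)^r := Real.rpow_pos_of_pos (by positivity) _
      have heq : ((n:ℝ)+1)^(a-1) * (((n:ℝ)+1)/((n:ℝ)+2))^r = ((n:ℝ)+2)^(a-1) := by
        rw [Real.div_rpow (by positivity) (by positivity),
          show a - 1 = -r by rw [hr]; ring,
          Real.rpow_neg (by positivity : (0:ℝ) ≤ (n:ℝ)+1),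
          Real.rpow_neg (by positivity : (0:ℝ) ≤ (n:ℝ)+2)]
        field_simp
      have e2 : ((n+1:ℕ):ℝ) + 1 = (n:ℝ) + 2 := by push_cast; ring
      rw [e2]
      calc |poch a (n+1)| / (n+1).factorial
          ≤ D * ((n:ℝ)+1)^(a-1) * (((n:ℝ)+1)/((n:ℝ)+2))^r := hstep
        _ = D * ((n:ℝ)+2)^(a-1) := by rw [mul_assoc, heq]
  refine ⟨D + ∑ i ∈ Finset.range N, |poch a i| / i.factorial * ((i:ℝ)+1)^(1-a),
    by positivity, fun n => ?_⟩
  have hsum0 : (0:ℝ) ≤ ∑ i ∈ Finset.range N, |poch a i| / i.factorial * ((i:ℝ)+1)^(1-a) :=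
    Finset.sum_nonneg fun i _ => by positivity
  have hpow : (0:ℝ) < ((n:ℝ)+1)^(a-1) := Real.rpow_pos_of_pos (by positivity) _
  rcases lt_or_ge n N with h | h
  · have h1 : |poch a n| / n.factorial
        = (|poch a n| / n.factorial * ((n:ℝ)+1)^(1-a)) * ((n:ℝ)+1)^(a-1) := by
      rw [mul_assoc, ← Real.rpow_add (by positivity), show (1-a)+(a-1) = 0 by ring,
        Real.rpow_zero, mul_one]
    rw [h1]
    apply mul_le_mul_of_nonneg_right _ hpow.le
    have h2 : |poch a n| / n.factorial * ((n:ℝ)+1)^(1-a)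
        ≤ ∑ i ∈ Finset.range N, |poch a i| / i.factorial * ((i:ℝ)+1)^(1-a) :=
      Finset.single_le_sum (f := fun i : ℕ => |poch a i| / i.factorial * ((i:ℝ)+1)^(1-a))
        (fun i _ => by positivity) (Finset.mem_range.mpr h)
    linarith
  · have h3 := key n h
    have h4 : D * ((n:ℝ)+1)^(a-1)
        ≤ (D + ∑ i ∈ Finset.range N, |poch a i| / i.factorial * ((i:ℝ)+1)^(1-a))
            * ((n:ℝ)+1)^(a-1) :=
      mul_le_mul_of_nonneg_right (by linarith) hpow.le
    linarith

end Stmt3Aux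

namespace Stmt3Aux

lemma poch_div_fact_le {a : ℝ} (ha : a < 1) :
    ∃ C : ℝ, 0 < C ∧ ∀ n : ℕ, |poch a n| / n.factorial ≤ C := by
  obtain ⟨C, hC0, hC⟩ := poch_decay ha
  refine ⟨C, hC0, fun n => (hC n).trans ?_⟩
  have : ((n:ℝ)+1) ^ (a-1) ≤ 1 :=
    Real.rpow_le_one_of_one_le_of_nonpos (by norm_num) (by linarith)
  nlinarith

lemma summable_key {a k q : ℝ} (ha : a < 1) (hk : -1 < k) (hq : 1 ≤ q) :
    Summable (fun n : ℕ => |poch a n| / ((k + 1 + q * n) * n.factorial)) := by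
  obtain ⟨C, hC0, hC⟩ := poch_decay ha
  set c : ℝ := min (k + 1) 1 with hc
  have hc0 : 0 < c := lt_min (by linarith) one_pos
  have hs : Summable (fun n : ℕ => ((n:ℝ)+1)^(a-2)) := by
    have h1 := (Real.summable_nat_rpow (p := a-2)).2 (by linarith)
    have h2 := (summable_nat_add_iff 1).2 h1
    refine h2.congr fun n => ?_
    push_cast
    norm_num
  have hpos : ∀ n : ℕ, (0:ℝ) < k + 1 + q * n := by
    intro n
    have h0 : (0:ℝ) ≤ q * n := mul_nonneg (by linarith) (Nat.cast_nonneg n)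
    linarith
  apply Summable.of_nonneg_of_le
    (fun n => div_nonneg (abs_nonneg _) (mul_nonneg (hpos n).le (Nat.cast_nonneg _)))
    _ (hs.mul_left (C / c))
  intro n
  have hn1 : (0:ℝ) < (n:ℝ) + 1 := by positivity
  have hden : c * ((n:ℝ)+1) ≤ k + 1 + q * n := by
    have h1 : c ≤ k + 1 := min_le_left _ _
    have h2 : c ≤ 1 := min_le_right _ _
    have h3 : (n:ℝ) ≤ q * n := le_mul_of_one_le_left (by positivity) hq
    nlinarith
  have e1 : |poch a n| / ((k + 1 + q * n) * n.factorial)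
      = (|poch a n| / n.factorial) / (k + 1 + q * n) := by
    rw [div_div, mul_comm]
  rw [e1]
  calc (|poch a n| / n.factorial) / (k + 1 + q * n)
      ≤ (C * ((n:ℝ)+1)^(a-1)) / (c * ((n:ℝ)+1)) := by
        exact div_le_div₀ (mul_nonneg hC0.le (Real.rpow_nonneg (by positivity) _)) (hC n)
          (mul_pos hc0 hn1) hden
    _ = C / c * ((n:ℝ)+1)^(a-2) := by
        have e2 : C / c * ((n:ℝ)+1)^(a-2) = C * ((n:ℝ)+1)^(a-1) / (c * ((n:ℝ)+1)) := by
          rw [show a - 2 = (a-1) - 1 by ring, Real.rpow_sub hn1, Real.rpow_one,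
            div_mul_div_comm]
        rw [e2]

/-- The binomial series: for `a < 1` and `0 ≤ v < 1`,
`∑' n, (a)_n / n! * v ^ n = (1 - v) ^ (-a)`. -/
lemma tsum_binomial {a : ℝ} (ha : a < 1) {v : ℝ} (h0 : 0 ≤ v) (h1 : v < 1) :
    ∑' n : ℕ, poch a n / n.factorial * v ^ n = (1 - v) ^ (-a) := by
  obtain ⟨B, hB0, hB⟩ := poch_div_fact_le ha
  rcases eq_or_lt_of_le h0 with hv0 | hv0
  · rw [← hv0]
    rw [tsum_eq_single 0 (fun n hn => by
      simp [zero_pow hn])]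
    simp [poch_zero]
  -- now 0 < v
  set R : ℝ := (1 + v) / 2 with hR
  have hvR : v < R := by rw [hR]; linarith
  have hR0 : 0 < R := by rw [hR]; linarith
  have hR1 : R < 1 := by rw [hR]; linarith
  set t : Set ℝ := Ioo (-R) R with ht
  have htO : IsOpen t := isOpen_Ioo
  have htP : IsPreconnected t := (convex_Ioo _ _).isPreconnected
  have h0t : (0:ℝ) ∈ t := by constructor <;> simp [hR0] <;> linarith
  have hvt : v ∈ t := ⟨by linarith, hvR⟩
  set g : ℕ → ℝ → ℝ := fun n y => poch a n / n.factorial * y ^ n with hg_def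
  set g' : ℕ → ℝ → ℝ := fun n y => poch a n / n.factorial * (n * y ^ (n - 1)) with hg'_def
  set u : ℕ → ℝ := fun n => B / R * (n * R ^ n) with hu_def
  have hu : Summable u := by
    have := summable_pow_mul_geometric_of_norm_lt_one (R := ℝ) 1
      (show ‖R‖ < 1 by rw [Real.norm_eq_abs, abs_of_pos hR0]; exact hR1)
    exact (this.congr (fun n => by rw [pow_one])).mul_left (B / R)
  have hg : ∀ n y, HasDerivAt (g n) (g' n y) y := fun n y =>
    ((hasDerivAt_pow n y).const_mul _)
  have hg'le : ∀ n y, y ∈ t → ‖g' n y‖ ≤ u n := by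
    intro n y hy
    have hyR : |y| ≤ R := by
      rw [abs_le]; exact ⟨hy.1.le, hy.2.le⟩
    match n with
    | 0 => simp [hg'_def, hu_def]
    | (m+1) =>
      have hRne : R ≠ 0 := hR0.ne'
      have e1 : ‖g' (m+1) y‖ = |poch a (m+1)| / ((m+1).factorial : ℝ)
          * (((m+1:ℕ):ℝ) * |y| ^ m) := by
        simp only [hg'_def, Nat.add_sub_cancel, Real.norm_eq_abs, abs_mul, abs_div,
          abs_pow, Nat.abs_cast]
      rw [e1]
      have e2 : u (m+1) = B * (((m+1:ℕ):ℝ) * R ^ m) := by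
        simp only [hu_def]
        rw [pow_succ]
        field_simp
      rw [e2]
      apply mul_le_mul (hB _)
      · apply mul_le_mul le_rfl (pow_le_pow_left₀ (abs_nonneg y) hyR m) (by positivity)
          (by positivity)
      · positivity
      · exact hB0.le
  have hgle : ∀ n y, y ∈ t → ‖g n y‖ ≤ B * R ^ n := by
    intro n y hy
    have hyR : |y| ≤ R := by rw [abs_le]; exact ⟨hy.1.le, hy.2.le⟩
    have e1 : ‖g n y‖ = |poch a n| / n.factorial * |y| ^ n := by
      rw [Real.norm_eq_abs, abs_mul, abs_div, abs_pow]
      simp [Nat.abs_cast]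
    rw [e1]
    exact mul_le_mul (hB n) (pow_le_pow_left₀ (abs_nonneg y) hyR n) (by positivity) hB0.le
  have hgsum : ∀ y, y ∈ t → Summable (fun n => g n y) := by
    intro y hy
    apply Summable.of_norm_bounded ((summable_geometric_of_lt_one hR0.le hR1).mul_left B)
    exact fun n => hgle n y hy
  have hg'sum : ∀ y, y ∈ t → Summable (fun n => g' n y) := by
    intro y hy
    exact Summable.of_norm_bounded hu (fun n => hg'le n y hy)
  set f : ℝ → ℝ := fun z => ∑' n, g n z with hf_def
  have hderiv : ∀ y ∈ t, HasDerivAt f (∑' n, g' n y) y := by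
    intro y hy
    exact hasDerivAt_tsum_of_isPreconnected hu htO htP (fun n y _ => hg n y) hg'le h0t (hgsum 0 h0t) hy
  -- the ODE identity
  have hODE : ∀ y ∈ t, (∑' n, g' n y) * (1 - y) = a * f y := by
    intro y hy
    set T : ℝ := ∑' n, g' n y with hT
    have hTsum : Summable (fun n => g' n y) := hg'sum y hy
    set h : ℕ → ℝ := fun n => poch a (n+1) / n.factorial * y ^ n with hh_def
    have hstep : ∀ n : ℕ, g' (n+1) y = h n := by
      intro n
      simp only [hg'_def, hh_def, Nat.add_sub_cancel, Nat.factorial_succ]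
      push_cast
      have hnf : (n.factorial : ℝ) ≠ 0 := by positivity
      field_simp
    have hhsum : Summable h := ((summable_nat_add_iff 1).2 hTsum).congr hstep
    have hshift : T = ∑' n, h n := by
      rw [hT, hTsum.tsum_eq_zero_add, show g' 0 y = 0 by simp [hg'_def], zero_add]
      exact tsum_congr hstep
    set w : ℕ → ℝ := fun n => (n : ℝ) * (poch a n / n.factorial * y ^ n) with hw_def
    have hwshift : ∀ n : ℕ, w (n+1) = y * h n := by
      intro n
      simp only [hw_def, hh_def, Nat.factorial_succ]
      push_cast
      have hnf : (n.factorial : ℝ) ≠ 0 := by positivity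
      field_simp
      ring
    have hwsum : Summable w := by
      apply (summable_nat_add_iff 1).1
      exact (hhsum.mul_left y).congr (fun n => (hwshift n).symm)
    have hwtsum : ∑' n, w n = y * T := by
      rw [hwsum.tsum_eq_zero_add, show w 0 = 0 by simp [hw_def], zero_add,
        tsum_congr hwshift, tsum_mul_left, hshift]
    have hsplit : ∀ n : ℕ, h n = a * g n y + w n := by
      intro n
      simp only [hh_def, hg_def, hw_def, poch_succ]
      have hnf : (n.factorial : ℝ) ≠ 0 := by positivity
      field_simp
    have hkey : T = a * f y + y * T := by
      calc T = ∑' n, h n := hshift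
        _ = ∑' n, (a * g n y + w n) := tsum_congr hsplit
        _ = a * ∑' n, g n y + ∑' n, w n := by
            rw [((hgsum y hy).mul_left a).tsum_add hwsum, tsum_mul_left]
        _ = a * f y + y * T := by rw [hwtsum]
    linear_combination hkey
  set F : ℝ → ℝ := fun z => f z * (1 - z) ^ a with hF_def
  have hFderiv : ∀ y ∈ t, HasDerivAt F 0 y := by
    intro y hy
    have hy1 : (0:ℝ) < 1 - y := by
      have := hy.2
      simp only [ht, mem_Ioo] at hy
      linarith [hy.2]
    have d1 : HasDerivAt f (∑' n, g' n y) y := hderiv y hy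
    have d2 : HasDerivAt (fun z : ℝ => (1 - z) ^ a) (a * (1 - y) ^ (a - 1) * (-1)) y := by
      have h3 : HasDerivAt (fun x : ℝ => x ^ a) (a * (1 - y) ^ (a - 1)) (1 - y) :=
        Real.hasDerivAt_rpow_const (Or.inl hy1.ne')
      have h4 : HasDerivAt (fun z : ℝ => 1 - z) (-1) y := by
        simpa using (hasDerivAt_id y).const_sub 1
      exact h3.comp y h4
    have d3 := d1.mul d2
    have d4 : HasDerivAt F ((∑' n, g' n y) * (1 - y) ^ a + f y * (a * (1 - y) ^ (a - 1) * (-1))) y := d3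
    convert d4 using 1
    have e5 : (1 - y) ^ a = (1 - y) * (1 - y) ^ (a - 1) := by
      nth_rewrite 1 [show a = 1 + (a - 1) by ring]
      rw [Real.rpow_add hy1, Real.rpow_one]
    have e6 := hODE y hy
    rw [e5]
    linear_combination (-((1 - y) ^ (a - 1))) * e6
  have hIcc : Icc (0:ℝ) v ⊆ t := by
    intro z hz
    exact ⟨by linarith [hz.1], by linarith [hz.2]⟩
  have hconst : F v = F 0 := by
    apply constant_of_has_deriv_right_zero
      (f := F) (a := 0) (b := v)
      (fun z hz => ((hFderiv z (hIcc hz)).differentiableAt).continuousAt.continuousWithinAt)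
      (fun z hz => ((hFderiv z (hIcc (Ico_subset_Icc_self hz))).hasDerivWithinAt))
      v (right_mem_Icc.2 hv0.le)
  have hF0 : F 0 = 1 := by
    simp only [hF_def]
    rw [show (1:ℝ) - 0 = 1 by ring, Real.one_rpow, mul_one]
    have : f 0 = g 0 0 := tsum_eq_single 0 (fun n hn => by simp [hg_def, zero_pow hn])
    rw [this]
    simp [hg_def, poch_zero]
  have h1v : (0:ℝ) < 1 - v := by linarith
  have hfv : f v * (1 - v) ^ a = 1 := by
    have : F v = 1 := hconst.trans hF0
    simpa [hF_def] using this
  have : (∑' n : ℕ, poch a n / n.factorial * v ^ n) = f v := rfl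
  rw [this, Real.rpow_neg h1v.le]
  exact eq_inv_of_mul_eq_one_left (by linear_combination hfv)

end Stmt3Aux

namespace Stmt3Aux

variable {p q : ℝ}

lemma meas_integrand : Measurable (fun t : ℝ => (1 - t ^ q) ^ (-(1/p))) := by
  measurability

lemma intervalIntegrable_integrand (hp : 1 < p) (hq : 1 < q) {y z : ℝ}
    (hy : y ∈ Icc (0:ℝ) 1) (hz : z ∈ Icc (0:ℝ) 1) :
    IntervalIntegrable (fun t : ℝ => (1 - t ^ q) ^ (-(1/p))) volume y z := by
  have hp0 : (0:ℝ) < 1/p := by positivity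
  have hp1 : 1/p < 1 := by rw [div_lt_one (by linarith)]; linarith
  have base : IntervalIntegrable (fun t : ℝ => (1 - t ^ q) ^ (-(1/p))) volume 0 1 := by
    have g1 : IntervalIntegrable (fun x : ℝ => x ^ (-(1/p))) volume 0 1 :=
      intervalIntegral.intervalIntegrable_rpow' (by linarith)
    have g2 : IntervalIntegrable (fun x : ℝ => (1 - x) ^ (-(1/p))) volume 0 1 := by
      have h := (g1.comp_sub_left 1)
      simp only [sub_zero, sub_self] at h
      exact h.symm
    apply g2.mono_fun meas_integrand.aestronglyMeasurable
    rw [uIoc_of_le (by norm_num : (0:ℝ) ≤ 1)]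
    filter_upwards [ae_restrict_mem measurableSet_Ioc] with t ht
    have ht0 : 0 < t := ht.1
    have ht1 : t ≤ 1 := ht.2
    have hbase0 : 0 ≤ 1 - t ^ q := by
      have : t ^ q ≤ 1 := Real.rpow_le_one ht0.le ht1 (by linarith)
      linarith
    rw [Real.norm_eq_abs, Real.norm_eq_abs, abs_of_nonneg (Real.rpow_nonneg hbase0 _),
      abs_of_nonneg (Real.rpow_nonneg (by linarith) _)]
    rcases eq_or_lt_of_le ht1 with h1 | h1
    · rw [h1, Real.one_rpow]
    · have htq : t ^ q ≤ t := by
        have h2 := Real.rpow_le_rpow_of_exponent_ge ht0 ht1 (le_of_lt hq)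
        rwa [Real.rpow_one] at h2
      exact Real.rpow_le_rpow_of_nonpos (by linarith) (by linarith) (by linarith)
  exact base.mono_set (uIcc_subset_uIcc
    (by rw [uIcc_of_le (by norm_num : (0:ℝ) ≤ 1)]; exact hy)
    (by rw [uIcc_of_le (by norm_num : (0:ℝ) ≤ 1)]; exact hz))

lemma gArcsin_zero : gArcsin p q 0 = 0 := intervalIntegral.integral_same

lemma gArcsin_sMono (hp : 1 < p) (hq : 1 < q) :
    StrictMonoOn (gArcsin p q) (Icc (0:ℝ) 1) := by
  intro y hy z hz hyz
  have hadd := intervalIntegral.integral_add_adjacent_intervals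
    (intervalIntegrable_integrand hp hq (left_mem_Icc.2 zero_le_one) hy)
    (intervalIntegrable_integrand hp hq hy hz)
  have hpos : 0 < ∫ t in y..z, (1 - t ^ q) ^ (-(1/p)) := by
    apply intervalIntegral.intervalIntegral_pos_of_pos_on
      (intervalIntegrable_integrand hp hq hy hz) _ hyz
    intro u hu
    have hu0 : 0 ≤ u := le_trans hy.1 hu.1.le
    have hu1 : u < 1 := lt_of_lt_of_le hu.2 hz.2
    have huq : u ^ q < 1 := Real.rpow_lt_one hu0 hu1 (by linarith)
    exact Real.rpow_pos_of_pos (by linarith) _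
  show gArcsin p q y < gArcsin p q z
  rw [gArcsin, gArcsin, ← hadd]
  linarith

lemma gArcsin_cont (hp : 1 < p) (hq : 1 < q) :
    ContinuousOn (gArcsin p q) (Icc (0:ℝ) 1) := by
  have hint : IntegrableOn (fun t : ℝ => (1 - t ^ q) ^ (-(1/p))) (uIcc (0:ℝ) 1) volume := by
    rw [uIcc_of_le zero_le_one,
      ← intervalIntegrable_iff_integrableOn_Icc_of_le zero_le_one]
    exact intervalIntegrable_integrand hp hq ⟨le_rfl, zero_le_one⟩ ⟨zero_le_one, le_rfl⟩
  have h := intervalIntegral.continuousOn_primitive_interval (a := (0:ℝ)) (b := 1)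
    (μ := volume) hint
  rw [uIcc_of_le zero_le_one] at h
  exact h

lemma gArcsin_hasDerivAt (hp : 1 < p) (hq : 1 < q) {y : ℝ} (hy : y ∈ Ico (0:ℝ) 1) :
    HasDerivAt (gArcsin p q) ((1 - y ^ q) ^ (-(1/p))) y := by
  have hyq : y ^ q < 1 := by
    rcases eq_or_lt_of_le hy.1 with h0 | h0
    · rw [← h0, Real.zero_rpow (by linarith : q ≠ 0)]; norm_num
    · exact Real.rpow_lt_one h0.le hy.2 (by linarith)
  have hcont : ContinuousAt (fun t : ℝ => (1 - t ^ q) ^ (-(1/p))) y := by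
    have c1 : ContinuousAt (fun t : ℝ => t ^ q) y :=
      Real.continuousAt_rpow_const y q (Or.inr (by linarith))
    have c2 : ContinuousAt (fun t : ℝ => 1 - t ^ q) y := continuousAt_const.sub c1
    have c3 : ContinuousAt (fun u : ℝ => u ^ (-(1/p))) (1 - y ^ q) :=
      Real.continuousAt_rpow_const _ _ (Or.inl (by linarith : (1:ℝ) - y ^ q ≠ 0))
    exact ContinuousAt.comp (f := fun t : ℝ => 1 - t ^ q) c3 c2
  exact intervalIntegral.integral_hasDerivAt_right
    (intervalIntegrable_integrand hp hq ⟨le_rfl, zero_le_one⟩ ⟨hy.1, hy.2.le⟩)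
    ⟨univ, univ_mem, meas_integrand.aestronglyMeasurable.restrict⟩ hcont

lemma gPi_half : gPi p q / 2 = gArcsin p q 1 := by rw [gPi]; ring

/-- value of `C` at interior points. -/
lemma cos_formula (hp : 1 < p) (hq : 1 < q) {S C : ℝ → ℝ} (hS : IsGSin p q S)
    (hC : IsGCos p q S C) {y : ℝ} (hy : y ∈ Ico (0:ℝ) 1) :
    C (gArcsin p q y) = (1 - y ^ q) ^ (1/p) := by
  have hy' : y ∈ Icc (0:ℝ) 1 := ⟨hy.1, hy.2.le⟩
  have hmono := gArcsin_sMono hp hq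
  have hmaps : MapsTo (gArcsin p q) (Icc (0:ℝ) 1) (Icc (0:ℝ) (gPi p q / 2)) := by
    intro z hz
    rw [gPi_half]
    constructor
    · rw [← gArcsin_zero (p := p) (q := q)]
      exact hmono.monotoneOn (left_mem_Icc.2 zero_le_one) hz hz.1
    · exact hmono.monotoneOn hz (right_mem_Icc.2 zero_le_one) hz.2
  have hx : gArcsin p q y ∈ Icc (0:ℝ) (gPi p q / 2) := hmaps hy'
  have hd := gArcsin_hasDerivAt hp hq hy
  have hcomp : HasDerivWithinAt (S ∘ gArcsin p q)
      (C (gArcsin p q y) * (1 - y ^ q) ^ (-(1/p))) (Icc (0:ℝ) 1) y :=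
    (hC _ hx).comp y (hd.hasDerivWithinAt) hmaps
  have hid : HasDerivWithinAt (fun z : ℝ => z)
      (C (gArcsin p q y) * (1 - y ^ q) ^ (-(1/p))) (Icc (0:ℝ) 1) y :=
    hcomp.congr (fun z hz => (hS z hz).symm) (hS y hy').symm
  have huniq : C (gArcsin p q y) * (1 - y ^ q) ^ (-(1/p)) = 1 :=
    UniqueDiffWithinAt.eq_deriv _ (uniqueDiffOn_Icc one_pos y hy') hid
      (hasDerivWithinAt_id y _)
  have hyq : y ^ q < 1 := by
    rcases eq_or_lt_of_le hy.1 with h0 | h0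
    · rw [← h0, Real.zero_rpow (by linarith : q ≠ 0)]; norm_num
    · exact Real.rpow_lt_one h0.le hy.2 (by linarith)
  have hbpos : (0:ℝ) < 1 - y ^ q := by linarith
  have hdpos : (0:ℝ) < (1 - y ^ q) ^ (-(1/p)) := Real.rpow_pos_of_pos hbpos _
  have h2 : C (gArcsin p q y) = ((1 - y ^ q) ^ (-(1/p)))⁻¹ :=
    eq_inv_of_mul_eq_one_left (by linear_combination huniq)
  rw [h2, ← Real.rpow_neg hbpos.le, neg_neg]

/-- Claim 2: the power-series evaluation of `∫₀ʸ s^k (1-s^q)^((l-1)/p) ds`. -/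
lemma G_series (hp : 1 < p) (hq : 1 < q) {k l : ℝ} (hk : -1 < k) (hl : 1 - p < l)
    {y : ℝ} (h0 : 0 < y) (h1 : y ≤ 1) :
    ∫ s in Ioo (0:ℝ) y, s ^ k * (1 - s ^ q) ^ ((l-1)/p)
      = ∑' n : ℕ, poch ((1-l)/p) n * y ^ (k + 1 + q * n) / ((k + 1 + q * n) * n.factorial) := by
  have hp0 : (0:ℝ) < p := by linarith
  set a : ℝ := (1-l)/p with ha_def
  have ha : a < 1 := by
    rw [ha_def, div_lt_one hp0]
    linarith
  have hKpos : ∀ n : ℕ, (0:ℝ) < k + 1 + q * n := by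
    intro n
    have : (0:ℝ) ≤ q * n := mul_nonneg (by linarith) (Nat.cast_nonneg n)
    linarith
  set F : ℕ → ℝ → ℝ := fun n s => poch a n / n.factorial * s ^ (k + q * n) with hF_def
  -- each F n is integrable on Ioo 0 y
  have hFint : ∀ n : ℕ, IntegrableOn (F n) (Ioo (0:ℝ) y) volume := by
    intro n
    have h2 : IntervalIntegrable (fun s : ℝ => s ^ (k + q * n)) volume 0 y :=
      intervalIntegral.intervalIntegrable_rpow' (by nlinarith [hKpos n])
    rw [intervalIntegrable_iff_integrableOn_Ioc_of_le h0.le] at h2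
    exact (h2.mono_set Ioo_subset_Ioc_self).const_mul _
  -- value of each integral
  have hFval : ∀ n : ℕ, ∫ s in Ioo (0:ℝ) y, F n s
      = poch a n / n.factorial * (y ^ (k + 1 + q * n) / (k + 1 + q * n)) := by
    intro n
    rw [← integral_Ioc_eq_integral_Ioo, ← intervalIntegral.integral_of_le h0.le]
    rw [intervalIntegral.integral_const_mul]
    rw [integral_rpow (Or.inl (by nlinarith [hKpos n]))]
    rw [Real.zero_rpow (by nlinarith [hKpos n] : k + q * n + 1 ≠ 0)]
    rw [show k + q * n + 1 = k + 1 + q * n by ring]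
    ring
  -- summable integral norms
  have hFnorm : ∀ n : ℕ, ∫ s in Ioo (0:ℝ) y, ‖F n s‖
      ≤ |poch a n| / ((k + 1 + q * n) * n.factorial) := by
    intro n
    have e1 : ∀ s ∈ Ioo (0:ℝ) y, ‖F n s‖ = |poch a n| / n.factorial * s ^ (k + q * n) := by
      intro s hs
      rw [Real.norm_eq_abs, abs_mul, abs_div, Nat.abs_cast,
        abs_of_nonneg (Real.rpow_nonneg hs.1.le _)]
    rw [setIntegral_congr_fun measurableSet_Ioo e1]
    have e2 : ∫ s in Ioo (0:ℝ) y, |poch a n| / n.factorial * s ^ (k + q * n)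
        = |poch a n| / n.factorial * (y ^ (k + 1 + q * n) / (k + 1 + q * n)) := by
      rw [← integral_Ioc_eq_integral_Ioo, ← intervalIntegral.integral_of_le h0.le,
        intervalIntegral.integral_const_mul,
        integral_rpow (Or.inl (by nlinarith [hKpos n])),
        Real.zero_rpow (by nlinarith [hKpos n] : k + q * n + 1 ≠ 0),
        show k + q * n + 1 = k + 1 + q * n by ring]
      ring
    rw [e2]
    have hyle : y ^ (k + 1 + q * n) ≤ 1 := Real.rpow_le_one h0.le h1 (hKpos n).le
    have h4 : y ^ (k + 1 + q * n) / (k + 1 + q * n) ≤ 1 / (k + 1 + q * n) :=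
      div_le_div₀ (by norm_num) hyle (hKpos n) le_rfl
    calc |poch a n| / n.factorial * (y ^ (k + 1 + q * n) / (k + 1 + q * n))
        ≤ |poch a n| / n.factorial * (1 / (k + 1 + q * n)) :=
          mul_le_mul_of_nonneg_left h4 (by positivity)
      _ = |poch a n| / ((k + 1 + q * n) * n.factorial) := by
          rw [div_mul_div_comm, mul_one, mul_comm ((n.factorial : ℝ)) _]
  have hFsum : Summable (fun n => ∫ s in Ioo (0:ℝ) y, ‖F n s‖) :=
    Summable.of_nonneg_of_le (fun n => integral_nonneg fun s => norm_nonneg _) hFnorm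
      (summable_key ha hk hq.le)
  have hinter := integral_tsum_of_summable_integral_norm
    (μ := volume.restrict (Ioo (0:ℝ) y)) hFint hFsum
  have hpt : ∀ s ∈ Ioo (0:ℝ) y, ∑' n, F n s = s ^ k * (1 - s ^ q) ^ ((l-1)/p) := by
    intro s hs
    have hs0 : (0:ℝ) < s := hs.1
    have hs1 : s < 1 := lt_of_lt_of_le hs.2 h1
    have hsq1 : s ^ q < 1 := Real.rpow_lt_one hs0.le hs1 (by linarith)
    have hsq0 : (0:ℝ) ≤ s ^ q := Real.rpow_nonneg hs0.le q
    have hbin := tsum_binomial ha hsq0 hsq1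
    have he : ∀ n : ℕ, F n s = s ^ k * (poch a n / n.factorial * (s ^ q) ^ n) := by
      intro n
      simp only [hF_def]
      rw [Real.rpow_add hs0, Real.rpow_mul hs0.le, Real.rpow_natCast]
      ring
    rw [tsum_congr he, tsum_mul_left, hbin,
      show -a = (l-1)/p by rw [ha_def]; ring]
  calc ∫ s in Ioo (0:ℝ) y, s ^ k * (1 - s ^ q) ^ ((l-1)/p)
      = ∫ s in Ioo (0:ℝ) y, ∑' n, F n s :=
        setIntegral_congr_fun measurableSet_Ioo (fun s hs => (hpt s hs).symm)
    _ = ∑' n, ∫ s in Ioo (0:ℝ) y, F n s := hinter.symm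
    _ = ∑' n : ℕ, poch ((1-l)/p) n * y ^ (k + 1 + q * n) / ((k + 1 + q * n) * n.factorial) := by
        apply tsum_congr
        intro n
        have hfn : (n.factorial : ℝ) ≠ 0 := by positivity
        rw [hFval n]
        field_simp [hfn, (hKpos n).ne']
        try ring
        try tauto

end Stmt3Aux


open Stmt3Aux in
/-- Theorem 3.1, formula (3.1): for `k > -1`, `ℓ > 1-p` and `x ∈ [0, π_{p,q}/2]`,
`∫₀ˣ sin_{p,q}ᵏ t · cos_{p,q}^ℓ t dt
  = (1/(k+1)) sin_{p,q}^{k+1} x · F((k+1)/q, (1-ℓ)/p; 1+(k+1)/q; sin_{p,q}^q x)`,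
with the hypergeometric series written out as a sum. -/
theorem stmt_3 (p q k l x : ℝ) (hp : 1 < p) (hq : 1 < q)
    (hk : -1 < k) (hl : 1 - p < l)
    (S C : ℝ → ℝ) (hS : IsGSin p q S) (hC : IsGCos p q S C)
    (hx : x ∈ Icc (0:ℝ) (gPi p q / 2)) :
    ∫ t in (0:ℝ)..x, S t ^ k * C t ^ l =
      (1 / (k + 1)) * S x ^ (k + 1) *
        ∑' n : ℕ,
          ((ascPochhammer ℝ n).eval ((k + 1) / q) * (ascPochhammer ℝ n).eval ((1 - l) / p) /
              (ascPochhammer ℝ n).eval (1 + (k + 1) / q)) *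
            S x ^ (q * (n : ℝ)) / (Nat.factorial n : ℝ) := by
  obtain ⟨hx0, hx2⟩ := hx
  have hhalf : gPi p q / 2 = gArcsin p q 1 := gPi_half
  have hmono := gArcsin_sMono hp hq
  have hcont := gArcsin_cont hp hq
  have hzero : gArcsin p q 0 = 0 := gArcsin_zero
  have hk1 : (0:ℝ) < k + 1 := by linarith
  have hsurj : ∀ z ∈ Icc (0:ℝ) (gArcsin p q 1), ∃ w ∈ Icc (0:ℝ) 1, gArcsin p q w = z := by
    intro z hz
    have h2 := intermediate_value_Icc zero_le_one hcont
    rw [hzero] at h2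
    obtain ⟨w, hw, hwz⟩ := h2 hz
    exact ⟨w, hw, hwz⟩
  obtain ⟨y, hy, hxy⟩ := hsurj x ⟨hx0, by rwa [← hhalf]⟩
  have hSx : S x = y := by rw [← hxy]; exact hS y hy
  rcases eq_or_lt_of_le hy.1 with hy0 | hy0
  · -- y = 0, x = 0
    have hx0' : x = 0 := by rw [← hxy, ← hy0, hzero]
    rw [hSx, ← hy0, Real.zero_rpow (by linarith : k + 1 ≠ 0), hx0',
      intervalIntegral.integral_same]
    ring
  -- main case : 0 < y
  have hxpos : 0 < x := by
    rw [← hxy]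
    calc (0:ℝ) = gArcsin p q 0 := hzero.symm
      _ < gArcsin p q y := hmono (left_mem_Icc.2 zero_le_one) hy hy0
  have hx1 : x ≤ gArcsin p q 1 := by rw [← hhalf]; exact hx2
  have hIoo_sub : Ioo (0:ℝ) x ⊆ Icc (0:ℝ) (gPi p q / 2) :=
    fun t ht => ⟨ht.1.le, le_trans ht.2.le hx2⟩
  have hAS : ∀ t ∈ Icc (0:ℝ) (gArcsin p q 1), gArcsin p q (S t) = t := by
    intro t ht
    obtain ⟨w, hw, hwt⟩ := hsurj t ht
    rw [← hwt, hS w hw]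
  have hSmem' : ∀ t ∈ Icc (0:ℝ) (gArcsin p q 1), S t ∈ Icc (0:ℝ) 1 := by
    intro t ht
    obtain ⟨w, hw, hwt⟩ := hsurj t ht
    rw [← hwt, hS w hw]; exact hw
  have hinj : InjOn S (Ioo 0 x) := by
    intro t1 h1 t2 h2 he
    have e1 := hAS t1 ⟨h1.1.le, le_trans h1.2.le hx1⟩
    have e2 := hAS t2 ⟨h2.1.le, le_trans h2.2.le hx1⟩
    rw [← e1, ← e2, he]
  have himage : S '' (Ioo 0 x) = Ioo 0 y := by
    apply Subset.antisymm
    · rintro s ⟨t, ht, rfl⟩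
      have htI : t ∈ Icc (0:ℝ) (gArcsin p q 1) := ⟨ht.1.le, le_trans ht.2.le hx1⟩
      have hw := hSmem' t htI
      constructor
      · rcases eq_or_lt_of_le hw.1 with h' | h'
        · exfalso
          have h3 : gArcsin p q (S t) = 0 := by rw [← h', hzero]
          rw [hAS t htI] at h3
          exact (ne_of_gt ht.1) h3
        · exact h'
      · by_contra hcon
        push_neg at hcon
        have h4 : gArcsin p q y ≤ gArcsin p q (S t) := hmono.monotoneOn hy hw hcon
        rw [hAS t htI, hxy] at h4
        exact absurd h4 (not_le.2 ht.2)
    · intro s hs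
      have hs1 : s ∈ Icc (0:ℝ) 1 := ⟨hs.1.le, le_trans hs.2.le hy.2⟩
      refine ⟨gArcsin p q s, ⟨?_, ?_⟩, hS s hs1⟩
      · calc (0:ℝ) = gArcsin p q 0 := hzero.symm
          _ < gArcsin p q s := hmono (left_mem_Icc.2 zero_le_one) hs1 hs.1
      · rw [← hxy]; exact hmono hs1 hy hs.2
  have hSIoo : ∀ t ∈ Ioo (0:ℝ) x, S t ∈ Ioo (0:ℝ) 1 := by
    intro t ht
    have h5 : S t ∈ Ioo 0 y := himage ▸ mem_image_of_mem S ht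
    exact ⟨h5.1, lt_of_lt_of_le h5.2 hy.2⟩
  have hCt : ∀ t ∈ Ioo (0:ℝ) x, C t = (1 - S t ^ q) ^ (1/p) := by
    intro t ht
    have htI : t ∈ Icc (0:ℝ) (gArcsin p q 1) := ⟨ht.1.le, le_trans ht.2.le hx1⟩
    have hwy : S t ∈ Ico (0:ℝ) 1 := ⟨(hSIoo t ht).1.le, (hSIoo t ht).2⟩
    have h6 := cos_formula hp hq hS hC hwy
    rwa [hAS t htI] at h6
  have hderivOn : ∀ t ∈ Ioo (0:ℝ) x, HasDerivWithinAt S (C t) (Ioo 0 x) t :=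
    fun t ht => (hC t (hIoo_sub ht)).mono hIoo_sub
  have hchg := integral_image_eq_integral_abs_deriv_smul measurableSet_Ioo hderivOn hinj
    (fun s => s ^ k * (1 - s ^ q) ^ ((l-1)/p))
  rw [himage] at hchg
  have heqn : ∀ t ∈ Ioo (0:ℝ) x,
      |C t| • (S t ^ k * (1 - S t ^ q) ^ ((l-1)/p)) = S t ^ k * C t ^ l := by
    intro t ht
    have hst := hSIoo t ht
    have hsq : S t ^ q < 1 := Real.rpow_lt_one hst.1.le hst.2 (by linarith)
    have hb : (0:ℝ) < 1 - S t ^ q := by linarith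
    have hc := hCt t ht
    have hc0 : 0 ≤ C t := by rw [hc]; exact Real.rpow_nonneg hb.le _
    rw [smul_eq_mul, abs_of_nonneg hc0, hc]
    calc (1 - S t ^ q) ^ (1/p) * (S t ^ k * (1 - S t ^ q) ^ ((l-1)/p))
        = S t ^ k * ((1 - S t ^ q) ^ ((l-1)/p) * (1 - S t ^ q) ^ (1/p)) := by ring
      _ = S t ^ k * (1 - S t ^ q) ^ ((l-1)/p + 1/p) := by rw [← Real.rpow_add hb]
      _ = S t ^ k * ((1 - S t ^ q) ^ (1/p)) ^ l := by
          rw [show (l-1)/p + 1/p = 1/p * l by ring, Real.rpow_mul hb.le]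
  rw [setIntegral_congr_fun measurableSet_Ioo heqn] at hchg
  have hLHS : ∫ t in (0:ℝ)..x, S t ^ k * C t ^ l = ∫ t in Ioo (0:ℝ) x, S t ^ k * C t ^ l := by
    rw [intervalIntegral.integral_of_le hxpos.le, integral_Ioc_eq_integral_Ioo]
  rw [hLHS, ← hchg, G_series hp hq hk hl hy0 hy.2, hSx]
  -- final series algebra
  have hpoch_eq : ∀ (c : ℝ) (n : ℕ), (ascPochhammer ℝ n).eval c = poch c n := fun _ _ => rfl
  simp only [hpoch_eq]
  set a : ℝ := (1-l)/p with ha_def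
  set b : ℝ := (k+1)/q with hb_def
  have hb0 : 0 < b := by rw [hb_def]; positivity
  have hqb : q * b = k + 1 := by rw [hb_def]; field_simp
  have hKpos : ∀ n : ℕ, (0:ℝ) < k + 1 + q * n := by
    intro n
    have : (0:ℝ) ≤ q * n := mul_nonneg (by linarith) (Nat.cast_nonneg n)
    linarith
  rw [← tsum_mul_left]
  apply tsum_congr
  intro n
  have hRpos : 0 < poch (1+b) n := poch_pos (by linarith) n
  have hfrac : poch b n * (k + 1 + q * n) = (k+1) * poch (1+b) n := by
    have h1 := poch_ratio b n
    linear_combination (-q) * h1 + (poch (1+b) n - poch b n) * hqb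
  have hQR : poch b n / poch (1+b) n = (k+1) / (k + 1 + q * n) := by
    rw [div_eq_div_iff hRpos.ne' (hKpos n).ne']
    exact hfrac
  have hy_add : y ^ (k + 1 + q * n) = y ^ (k+1) * y ^ (q * n) := Real.rpow_add hy0 _ _
  have hfn : (n.factorial : ℝ) ≠ 0 := by positivity
  rw [show poch b n * poch a n / poch (1+b) n = poch a n * (poch b n / poch (1+b) n) by ring,
    hQR, hy_add]
  field_simp
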